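/- Let v : [0,T] → ℝ be absolutely continuous (say, continuously differentiable) and 0 < α < 1. Then for every t ∈ (0,T], v(t) · ∂₀ₜ^α v(t) ≥ (1/2) ∂₀ₜ^α (v²)(t), where ∂₀ₜ^α denotes the Caputo fractional derivative of order α. -/

import Mathlib

open Real Set MeasureTheory intervalIntegral Filter Topology

/-- The Caputo fractional derivative of order α ∈ (0,1) of v at time t. -/
noncomputable def caputo (α : ℝ) (v : ℝ → ℝ) (t : ℝ) : ℝ :=
  (1 / Real.Gamma (1 - α)) * ∫ η in (0 : ℝ)..t, deriv v η * (t - η) ^ (-α)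

/-- Lemma 1 (Alikhanov): v(t) ∂₀ₜ^α v(t) ≥ ½ ∂₀ₜ^α (v²)(t). -/
theorem stmt_4 (α T : ℝ) (hα0 : 0 < α) (hα1 : α < 1) (hT : 0 < T)
    (v : ℝ → ℝ) (hv : ContDiff ℝ 1 v) :
    ∀ t ∈ Ioc (0 : ℝ) T,
      (1 / 2) * caputo α (fun s => v s ^ 2) t ≤ v t * caputo α v t := by
  intro t ht
  obtain ⟨ht0, htT⟩ := ht
  have hv' : Continuous (deriv v) := hv.continuous_deriv le_rfl
  have hvc : Continuous v := hv.continuous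
  have hdv : ∀ x : ℝ, HasDerivAt v (deriv v x) x :=
    fun x => (hv.differentiable one_ne_zero x).hasDerivAt
  set g : ℝ → ℝ := fun η => (t - η) ^ (-α) with hgdef
  have hg_int : IntervalIntegrable g volume 0 t := by
    have h1 : IntervalIntegrable (fun x : ℝ => x ^ (-α)) volume t 0 :=
      (intervalIntegral.intervalIntegrable_rpow' (by linarith)).symm
    simpa using h1.comp_sub_left t
  have hcont_g : ∀ s ∈ Iio t, ContinuousAt g s := by
    intro s hs
    exact (continuousAt_const.sub continuousAt_id).rpow_const
      (Or.inl (ne_of_gt (sub_pos.2 hs)))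
  set f : ℝ → ℝ := fun η => (v t - v η) * deriv v η * g η with hfdef
  have hf_cont : ContinuousOn f (Iio t) := fun s hs =>
    (((continuousAt_const.sub hvc.continuousAt).mul hv'.continuousAt).mul
      (hcont_g s hs)).continuousWithinAt
  have hf_int_t : IntervalIntegrable f volume 0 t :=
    hg_int.continuousOn_mul (((continuous_const.sub hvc).mul hv').continuousOn)
  set F : ℝ → ℝ := fun s => ∫ η in (0:ℝ)..s, f η with hFdef
  have hF_cont : ContinuousOn F (Icc 0 t) := by
    have h := intervalIntegral.continuousOn_primitive_interval
      (μ := volume) (a := (0:ℝ)) (b := t) (f := f) ?_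
    · rwa [uIcc_of_le ht0.le] at h
    · rw [uIcc_of_le ht0.le]
      exact (intervalIntegrable_iff_integrableOn_Icc_of_le ht0.le).1 hf_int_t
  set G : ℝ → ℝ := fun s => F s + (1/2) * (v t - v s)^2 * g s with hGdef
  have hG_deriv : ∀ s ∈ Ioo 0 t,
      HasDerivAt G ((α/2) * (v t - v s)^2 * (t - s) ^ (-α - 1)) s := by
    intro s hs
    have hFd : HasDerivAt F (f s) s := by
      refine intervalIntegral.integral_hasDerivAt_right
        (hf_int_t.mono_set ?_)
        (hf_cont.stronglyMeasurableAtFilter isOpen_Iio s hs.2)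
        (((continuousAt_const.sub hvc.continuousAt).mul hv'.continuousAt).mul
          (hcont_g s hs.2))
      rw [uIcc_of_le hs.1.le, uIcc_of_le ht0.le]
      exact Icc_subset_Icc le_rfl hs.2.le
    have hgd : HasDerivAt g (α * (t - s) ^ (-α - 1)) s := by
      have h1 : HasDerivAt (fun x : ℝ => t - x) (-1) s := (hasDerivAt_id s).const_sub t
      have h2 : HasDerivAt (fun y : ℝ => y ^ (-α)) ((-α) * (t - s) ^ (-α - 1)) (t - s) :=
        Real.hasDerivAt_rpow_const (Or.inl (ne_of_gt (sub_pos.2 hs.2)))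
      have h3 := h2.comp s h1
      exact h3.congr_deriv (by ring)
    have hq : HasDerivAt (fun s => (1/2) * (v t - v s)^2 * g s)
        (((1/2) * (2 * (v t - v s) ^ 1 * (-(deriv v s)))) * g s
          + ((1/2) * (v t - v s)^2) * (α * (t - s) ^ (-α - 1))) s := by
      exact ((((hdv s).const_sub (v t)).pow 2).const_mul (1/2)).mul hgd
    have h := hFd.add hq
    exact h.congr_deriv (by simp only [hfdef]; ring)
  have hG_cont : ContinuousOn G (Ico 0 t) := by
    intro s hs
    refine ((hF_cont s (Ico_subset_Icc_self hs)).mono Ico_subset_Icc_self).add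
      (ContinuousAt.continuousWithinAt ?_)
    exact ((continuousAt_const.mul
      ((continuousAt_const.sub hvc.continuousAt).pow 2)).mul (hcont_g s hs.2))
  have hmono : MonotoneOn G (Ico 0 t) := by
    refine monotoneOn_of_deriv_nonneg (convex_Ico 0 t) hG_cont ?_ ?_
    · rw [interior_Ico]
      exact fun x hx => ((hG_deriv x hx).differentiableAt).differentiableWithinAt
    · rw [interior_Ico]
      intro x hx
      rw [(hG_deriv x hx).deriv]
      exact mul_nonneg (mul_nonneg (by positivity) (sq_nonneg _))
        (Real.rpow_nonneg (by linarith [hx.2]) _)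
  have hF0 : F 0 = 0 := intervalIntegral.integral_same
  have hFt_low : ∀ s ∈ Ico 0 t, -((1/2) * (v t - v s)^2 * g s) ≤ F s := by
    intro s hs
    have h0 : G 0 ≤ G s := hmono ⟨le_rfl, ht0⟩ hs hs.1
    have hG0 : 0 ≤ G 0 := by
      simp only [hGdef, hF0, zero_add]
      exact mul_nonneg (mul_nonneg (by norm_num) (sq_nonneg _))
        (Real.rpow_nonneg (by simpa using ht0.le) _)
    simp only [hGdef] at h0 hG0
    linarith
  -- Lipschitz-type bound
  obtain ⟨L, hL⟩ := isCompact_Icc.exists_bound_of_continuousOn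
    (s := Icc (0:ℝ) t) hv'.continuousOn
  have hL0 : 0 ≤ L := le_trans (norm_nonneg _) (hL 0 ⟨le_rfl, ht0.le⟩)
  have hlip : ∀ s ∈ Icc 0 t, |v t - v s| ≤ L * (t - s) := by
    intro s hs
    have h := norm_image_sub_le_of_norm_deriv_le_segment' (a := s) (b := t)
      (f := v) (f' := deriv v)
      (fun x _ => (hdv x).hasDerivWithinAt)
      (fun x hx => hL x ⟨le_trans hs.1 hx.1, hx.2.le⟩) t ⟨hs.2, le_rfl⟩
    simpa [Real.norm_eq_abs] using h
  -- limits
  have hneBot : (𝓝[Ioo (0:ℝ) t] t).NeBot := right_nhdsWithin_Ioo_neBot ht0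
  have hFt : Tendsto F (𝓝[Ioo (0:ℝ) t] t) (𝓝 (F t)) :=
    (hF_cont t (right_mem_Icc.2 ht0.le)).mono Ioo_subset_Icc_self
  have hlow : Tendsto (fun s => -((1/2) * (v t - v s)^2 * g s))
      (𝓝[Ioo (0:ℝ) t] t) (𝓝 0) := by
    have hmaj : Tendsto (fun s : ℝ => (L^2/2) * (t - s) ^ ((2:ℝ) - α))
        (𝓝[Ioo (0:ℝ) t] t) (𝓝 0) := by
      have h1 : Tendsto (fun s : ℝ => t - s) (𝓝[Ioo (0:ℝ) t] t) (𝓝 0) := by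
        have h := ((continuous_sub_left t).tendsto t).mono_left
          (nhdsWithin_le_nhds (s := Ioo (0:ℝ) t))
        simpa using h
      have h2 : ContinuousAt (fun x : ℝ => x ^ ((2:ℝ) - α)) 0 :=
        Real.continuousAt_rpow_const 0 _ (Or.inr (by linarith))
      have h3 := (h2.tendsto.comp h1)
      rw [Real.zero_rpow (by intro h; linarith [h])] at h3
      simpa using h3.const_mul (L^2/2)
    refine squeeze_zero_norm' ?_ hmaj
    filter_upwards [self_mem_nhdsWithin] with s hs
    have hts : 0 < t - s := sub_pos.2 hs.2
    have h1 : |v t - v s| ≤ L * (t - s) := hlip s ⟨hs.1.le, hs.2.le⟩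
    have h2 : (v t - v s)^2 ≤ (L * (t - s))^2 := by
      rw [← sq_abs (v t - v s)]
      exact pow_le_pow_left₀ (abs_nonneg _) h1 2
    have hg_nonneg : 0 ≤ g s := Real.rpow_nonneg hts.le _
    rw [norm_neg, Real.norm_eq_abs, abs_of_nonneg
      (mul_nonneg (mul_nonneg (by norm_num) (sq_nonneg _)) hg_nonneg)]
    have key : (L * (t - s))^2 * g s = (L^2) * (t - s) ^ ((2:ℝ) - α) := by
      simp only [hgdef, mul_pow]
      rw [show ((t - s)^2 : ℝ) = (t - s) ^ ((2:ℝ)) by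
        rw [← Real.rpow_natCast (t - s) 2]; norm_num,
        mul_assoc, ← Real.rpow_add hts]
      ring_nf
    nlinarith [mul_le_mul_of_nonneg_right h2 hg_nonneg]
  have hF_nonneg : (0:ℝ) ≤ F t := by
    refine le_of_tendsto_of_tendsto hlow hFt ?_
    filter_upwards [self_mem_nhdsWithin] with s hs
    exact hFt_low s (Ioo_subset_Ico_self hs)
  -- final assembly
  have hΓ : 0 < Real.Gamma (1 - α) := Real.Gamma_pos_of_pos (by linarith)
  have hA : IntervalIntegrable (fun η => v t * deriv v η * g η) volume 0 t :=
    hg_int.continuousOn_mul ((continuous_const.mul hv').continuousOn)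
  have hB : IntervalIntegrable (fun η => v η * deriv v η * g η) volume 0 t :=
    hg_int.continuousOn_mul ((hvc.mul hv').continuousOn)
  have hsplit : F t = (∫ η in (0:ℝ)..t, v t * deriv v η * g η)
      - ∫ η in (0:ℝ)..t, v η * deriv v η * g η := by
    rw [← intervalIntegral.integral_sub hA hB]
    apply intervalIntegral.integral_congr
    intro x _
    simp only [hfdef]
    ring
  have hkey : (∫ η in (0:ℝ)..t, v η * deriv v η * g η)
      ≤ ∫ η in (0:ℝ)..t, v t * deriv v η * g η := by
    rw [hsplit] at hF_nonneg; linarith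
  have hderiv_sq : ∀ η : ℝ, deriv (fun s => v s ^ 2) η = 2 * v η * deriv v η := by
    intro η
    have := ((hdv η).fun_pow 2).deriv
    simpa using this
  unfold caputo
  have e1 : (∫ η in (0:ℝ)..t, deriv (fun s => v s ^ 2) η * (t - η) ^ (-α))
      = 2 * ∫ η in (0:ℝ)..t, v η * deriv v η * g η := by
    rw [← intervalIntegral.integral_const_mul]
    apply intervalIntegral.integral_congr
    intro x _
    show deriv (fun s => v s ^ 2) x * (t - x) ^ (-α) = 2 * (v x * deriv v x * g x)
    rw [hderiv_sq x]
    simp only [hgdef]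
    ring
  have e2 : (∫ η in (0:ℝ)..t, v t * deriv v η * g η)
      = v t * ∫ η in (0:ℝ)..t, deriv v η * (t - η) ^ (-α) := by
    rw [← intervalIntegral.integral_const_mul]
    apply intervalIntegral.integral_congr
    intro x _
    show v t * deriv v x * g x = v t * (deriv v x * (t - x) ^ (-α))
    simp only [hgdef]
    ring
  rw [e1]
  have hc : (0:ℝ) ≤ 1 / Real.Gamma (1 - α) := by positivity
  calc (1/2) * ((1 / Real.Gamma (1 - α)) * (2 * ∫ η in (0:ℝ)..t, v η * deriv v η * g η))
      = (1 / Real.Gamma (1 - α)) * ∫ η in (0:ℝ)..t, v η * deriv v η * g η := by ring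
    _ ≤ (1 / Real.Gamma (1 - α)) * ∫ η in (0:ℝ)..t, v t * deriv v η * g η :=
        mul_le_mul_of_nonneg_left hkey hc
    _ = (1 / Real.Gamma (1 - α)) * (v t * ∫ η in (0:ℝ)..t, deriv v η * (t - η) ^ (-α)) := by
        rw [e2]
    _ = v t * ((1 / Real.Gamma (1 - α)) * ∫ η in (0:ℝ)..t, deriv v η * (t - η) ^ (-α)) := by
        ring
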